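/- Let A(z) be the unique power series with A(0) = 0 satisfying A(z) = z + A(z)^3/(1 - A(z)^2). Then the radius of convergence of A equals -(1/8)·sqrt(5-√17)·(√17 - 7) ≈ 0.33674. -/

import Mathlib

open PowerSeries FormalMultilinearSeries
open scoped NNReal ENNReal

namespace BipRad


noncomputable def s : ℝ := Real.sqrt 17
noncomputable def rho : ℝ := Real.sqrt (5 - s) / 2
noncomputable def z0 : ℝ := rho * (7 - s) / 4

lemma s_nonneg : 0 ≤ s := Real.sqrt_nonneg _
lemma s_sq : s ^ 2 = 17 := Real.sq_sqrt (by norm_num)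
lemma s_lt_five : s < 5 := by nlinarith [s_sq, s_nonneg]
lemma one_lt_s : 1 < s := by nlinarith [s_sq, s_nonneg]
lemma rho_pos : 0 < rho := by
  have h : 0 < 5 - s := by linarith [s_lt_five]
  have := Real.sqrt_pos.mpr h
  unfold rho; linarith
lemma rho_sq : rho ^ 2 = (5 - s) / 4 := by
  rw [rho, div_pow, Real.sq_sqrt (by linarith [s_lt_five])]; norm_num
lemma rho_lt_one : rho < 1 := by nlinarith [rho_sq, rho_pos, one_lt_s]
lemma rho_sq_lt_one : rho ^ 2 < 1 := by nlinarith [rho_pos, rho_lt_one]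
lemma z0_pos : 0 < z0 := by
  have h1 := rho_pos; have h2 := s_lt_five
  unfold z0; nlinarith

lemma key_id (y : ℝ) :
    rho ^ 2 * (2*y^3 - z0*y^2 - y + z0) = (2*y*rho^2 + z0) * (y - rho)^2 := by
  unfold z0
  linear_combination (y^2*rho*(9+s)/4 - 2*y*rho^2) * rho_sq - y^2*rho/16 * s_sq

lemma key_ineq {y : ℝ} (hy : 0 ≤ y) : 0 ≤ 2*y^3 - z0*y^2 - y + z0 := by
  have h1 := key_id y
  have h2 : 0 ≤ (2*y*rho^2 + z0) * (y - rho)^2 := by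
    have := z0_pos; have := rho_pos
    positivity
  by_contra h
  push_neg at h
  have h3 : rho^2 * (2*y^3 - z0*y^2 - y + z0) < 0 :=
    mul_neg_of_pos_of_neg (pow_pos rho_pos 2) h
  linarith [h1 ▸ h3]

lemma double_root : 2*rho^3 - z0*rho^2 - rho + z0 = 0 := by
  unfold z0
  linear_combination (rho*(1+s)/4) * rho_sq - rho/16 * s_sq

lemma exists_y {x : ℝ} (hx0 : 0 < x) (hxz : x < z0) :
    ∃ y : ℝ, 0 < y ∧ y < 1 ∧ x ≤ y ∧ 2*y^3 - x*y^2 - y + x = 0 := by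
  set f : ℝ → ℝ := fun y => 2*y^3 - x*y^2 - y + x with hf
  have hcont : ContinuousOn f (Set.Icc 0 rho) := by fun_prop
  have hfrho : f rho < 0 := by
    have h0 := double_root
    have hp : (z0 - x) * (rho^2 - 1) < 0 :=
      mul_neg_of_pos_of_neg (sub_pos.mpr hxz) (by linarith [rho_sq_lt_one])
    simp only [hf]
    nlinarith [h0, hp]
  have hf0 : 0 < f 0 := by simp [hf]; nlinarith
  have hmem : (0:ℝ) ∈ Set.Icc (f rho) (f 0) := ⟨le_of_lt hfrho, le_of_lt hf0⟩
  obtain ⟨y, hy, hfy⟩ := intermediate_value_Icc' (le_of_lt rho_pos) hcont hmem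
  simp only [hf] at hfy
  have h1 : y < 1 := lt_of_le_of_lt hy.2 rho_lt_one
  have h2 : 0 ≤ y := hy.1
  refine ⟨y, ?_, h1, ?_, hfy⟩
  · rcases lt_or_eq_of_le hy.1 with h | h
    · exact h
    · exfalso; rw [← h] at hfy; simp at hfy; nlinarith
  · -- x ≤ y
    by_contra hxy
    push_neg at hxy
    have hy2 : (0:ℝ) < 1 - y^2 := by nlinarith
    have hpr : 0 < (x - y) * (1 - y^2) := mul_pos (by linarith) hy2
    nlinarith [hfy, hpr, pow_nonneg h2 3]




noncomputable def psum (F : PowerSeries ℝ) (N : ℕ) (x : ℝ) : ℝ :=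
  ∑ n ∈ Finset.range N, coeff n F * x ^ n

lemma psum_nonneg {F : PowerSeries ℝ} (h : ∀ n, 0 ≤ coeff n F) {x : ℝ} (hx : 0 ≤ x) (N : ℕ) :
    0 ≤ psum F N x :=
  Finset.sum_nonneg fun n _ => mul_nonneg (h n) (pow_nonneg hx n)

lemma coeff_mul_nonneg {F G : PowerSeries ℝ} (hF : ∀ n, 0 ≤ coeff n F)
    (hG : ∀ n, 0 ≤ coeff n G) : ∀ n, 0 ≤ coeff n (F * G) := by
  intro n
  rw [PowerSeries.coeff_mul]
  exact Finset.sum_nonneg fun p _ => mul_nonneg (hF _) (hG _)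

lemma coeff_mul_nonneg_upto {F G : PowerSeries ℝ} {n : ℕ} (hF : ∀ m ≤ n, 0 ≤ coeff m F)
    (hG : ∀ m ≤ n, 0 ≤ coeff m G) : ∀ m ≤ n, 0 ≤ coeff m (F * G) := by
  intro m hm
  rw [PowerSeries.coeff_mul]
  apply Finset.sum_nonneg
  intro p hp
  rw [Finset.HasAntidiagonal.mem_antidiagonal] at hp
  exact mul_nonneg (hF _ (by omega)) (hG _ (by omega))

lemma psum_mul_le {F G : PowerSeries ℝ} (hF : ∀ n, 0 ≤ coeff n F)
    (hG : ∀ n, 0 ≤ coeff n G) {x : ℝ} (hx : 0 ≤ x) (N : ℕ) :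
    psum (F * G) N x ≤ psum F N x * psum G N x := by
  have hrw : psum (F * G) N x
      = ∑ p ∈ (Finset.range N).biUnion (fun n => Finset.HasAntidiagonal.antidiagonal n),
        (coeff p.1 F * x ^ p.1) * (coeff p.2 G * x ^ p.2) := by
    rw [Finset.sum_biUnion]
    · apply Finset.sum_congr rfl
      intro n _
      rw [PowerSeries.coeff_mul, Finset.sum_mul]
      apply Finset.sum_congr rfl
      intro p hp
      rw [Finset.HasAntidiagonal.mem_antidiagonal] at hp
      rw [← hp, pow_add]
      ring
    · intro a _ b _ hab
      simp only [Finset.disjoint_left]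
      intro p hpa hpb
      rw [Finset.HasAntidiagonal.mem_antidiagonal] at hpa hpb
      exact hab (hpa ▸ hpb)
  rw [hrw]
  unfold psum
  rw [Finset.sum_mul_sum, ← Finset.sum_product']
  apply Finset.sum_le_sum_of_subset_of_nonneg
  · intro p hp
    simp only [Finset.mem_biUnion, Finset.mem_range, Finset.HasAntidiagonal.mem_antidiagonal] at hp
    obtain ⟨n, hn, hpn⟩ := hp
    simp only [Finset.mem_product, Finset.mem_range]
    omega
  · intro p _ _
    exact mul_nonneg (mul_nonneg (hF _) (pow_nonneg hx _)) (mul_nonneg (hG _) (pow_nonneg hx _))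

lemma psum_add (F G : PowerSeries ℝ) (N : ℕ) (x : ℝ) :
    psum (F + G) N x = psum F N x + psum G N x := by
  unfold psum
  rw [← Finset.sum_add_distrib]
  apply Finset.sum_congr rfl
  intro n _
  rw [map_add]
  ring

lemma coeff_X2_mul (F : PowerSeries ℝ) (n : ℕ) :
    PowerSeries.coeff n (X ^ 2 * F) = if 2 ≤ n then coeff (n - 2) F else 0 := by
  rw [mul_comm, PowerSeries.coeff_mul_X_pow']

lemma psum_X2 (F : PowerSeries ℝ) (N : ℕ) (x : ℝ) :
    psum (X ^ 2 * F) (N + 2) x = x ^ 2 * psum F N x := by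
  induction N with
  | zero =>
    simp [psum, Finset.sum_range_succ, coeff_X2_mul]
  | succ M ih =>
    have h1 : M + 1 + 2 = (M + 2) + 1 := by omega
    rw [h1]
    unfold psum
    rw [Finset.sum_range_succ]
    have h2 : ∑ n ∈ Finset.range (M + 2), PowerSeries.coeff n (X^2*F) * x ^ n = x ^ 2 * psum F M x := by
      rw [← ih]; rfl
    rw [h2, coeff_X2_mul]
    simp only [show 2 ≤ M + 2 by omega, if_true, Nat.add_sub_cancel]
    unfold psum
    rw [Finset.sum_range_succ]
    ring

lemma psum_one_le {x : ℝ} (N : ℕ) : psum (1 : PowerSeries ℝ) N x ≤ 1 := by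
  cases N with
  | zero => simp [psum]
  | succ M =>
    have : psum (1 : PowerSeries ℝ) (M + 1) x = 1 := by
      unfold psum
      rw [Finset.sum_eq_single 0]
      · simp
      · intro b _ hb; rw [PowerSeries.coeff_one]; simp [hb]
      · intro h; exact absurd (Finset.mem_range.mpr (by omega)) h
    linarith [this]




variable {A : PowerSeries ℝ}

section Rel

variable (h0 : constantCoeff A = 0) (hA : A = X + A ^ 3 * (1 - A ^ 2)⁻¹)

noncomputable def Cs (A : PowerSeries ℝ) : PowerSeries ℝ :=
  PowerSeries.mk fun n => coeff (n + 1) A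

noncomputable def Bs (A : PowerSeries ℝ) : PowerSeries ℝ := (1 - A ^ 2)⁻¹

include h0 in
lemma hXC : A = X * Cs A := by
  ext n
  cases n with
  | zero =>
    simp only [coeff_zero_eq_constantCoeff, h0, map_mul, constantCoeff_X, zero_mul]
  | succ m =>
    rw [PowerSeries.coeff_succ_X_mul, Cs, PowerSeries.coeff_mk]

include h0 in
lemma hBmul : (1 - A ^ 2) * Bs A = 1 := by
  apply PowerSeries.mul_inv_cancel
  rw [map_sub, map_one, map_pow, h0]
  norm_num

include h0 hA in
lemma hCrel : Cs A = 1 + X ^ 2 * ((Cs A) ^ 3 * Bs A) := by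
  apply mul_left_cancel₀ (PowerSeries.X_ne_zero (R := ℝ))
  calc X * Cs A = A := (hXC h0).symm
    _ = X + A ^ 3 * Bs A := hA
    _ = X + (X * Cs A) ^ 3 * Bs A := by rw [← hXC h0]
    _ = X * (1 + X ^ 2 * ((Cs A) ^ 3 * Bs A)) := by ring

include h0 in
lemma hBrel : Bs A = 1 + X ^ 2 * ((Cs A) ^ 2 * Bs A) := by
  have h1 := hBmul h0
  have h2 := hXC h0
  linear_combination h1 + (A + X * Cs A) * (Bs A) * h2

include h0 hA in
lemma hcubic : 2 * A ^ 3 = A + X * A ^ 2 - X := by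
  have h1 := hBmul h0
  have hA' : A = X + A ^ 3 * Bs A := hA
  linear_combination (A ^ 2 - 1) * hA' - A ^ 3 * h1

end Rel


section Main

variable {A : PowerSeries ℝ}
variable (h0 : constantCoeff A = 0) (hA : A = X + A ^ 3 * (1 - A ^ 2)⁻¹)

include h0 hA in
lemma coeff_CB_nonneg : ∀ n, 0 ≤ coeff n (Cs A) ∧ 0 ≤ coeff n (Bs A) := by
  intro n
  induction n using Nat.strong_induction_on with
  | _ n ih =>
    have h1nn : (0:ℝ) ≤ coeff n 1 := by
      rw [PowerSeries.coeff_one]; split <;> norm_num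
    have hC2 : coeff n (Cs A)
        = coeff n 1 + (if 2 ≤ n then coeff (n-2) ((Cs A)^3 * Bs A) else 0) := by
      conv_lhs => rw [hCrel h0 hA]
      rw [map_add, coeff_X2_mul]
    have hB2 : coeff n (Bs A)
        = coeff n 1 + (if 2 ≤ n then coeff (n-2) ((Cs A)^2 * Bs A) else 0) := by
      conv_lhs => rw [hBrel h0]
      rw [map_add, coeff_X2_mul]
    by_cases h2n : 2 ≤ n
    · have hCup : ∀ m ≤ n - 2, 0 ≤ coeff m (Cs A) := fun m hm => (ih m (by omega)).1
      have hBup : ∀ m ≤ n - 2, 0 ≤ coeff m (Bs A) := fun m hm => (ih m (by omega)).2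
      have hCB := coeff_mul_nonneg_upto hCup hBup
      have hCCB := coeff_mul_nonneg_upto hCup hCB
      have hCCCB := coeff_mul_nonneg_upto hCup hCCB
      have e3 : (Cs A)^3 * Bs A = Cs A * (Cs A * (Cs A * Bs A)) := by ring
      have e2 : (Cs A)^2 * Bs A = Cs A * (Cs A * Bs A) := by ring
      constructor
      · rw [hC2, e3]
        simp only [h2n, if_true]
        exact add_nonneg h1nn (hCCCB (n-2) le_rfl)
      · rw [hB2, e2]
        simp only [h2n, if_true]
        exact add_nonneg h1nn (hCCB (n-2) le_rfl)
    · constructor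
      · rw [hC2]; simp only [h2n, if_false]; simpa using h1nn
      · rw [hB2]; simp only [h2n, if_false]; simpa using h1nn

include h0 hA in
lemma coeff_A_nonneg : ∀ n, 0 ≤ coeff n A := by
  intro n
  cases n with
  | zero => rw [coeff_zero_eq_constantCoeff, h0]
  | succ m =>
    have : coeff (m+1) A = coeff m (Cs A) := by rw [Cs, PowerSeries.coeff_mk]
    rw [this]
    exact (coeff_CB_nonneg h0 hA m).1

include h0 hA in
lemma main_bound {x y w : ℝ} (hx0 : 0 < x) (hxley : x ≤ y) (hw1 : 1 ≤ w)
    (hxy : x + y^3*w = y) (hwrel : 1 + y^2*w = w) :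
    ∀ N, psum (Cs A) N x ≤ y / x ∧ psum (Bs A) N x ≤ w := by
  have hy0 : 0 ≤ y := le_trans hx0.le hxley
  have hw0 : 0 ≤ w := by linarith
  have hyx0 : 0 ≤ y / x := div_nonneg hy0 hx0.le
  have hCnn : ∀ n, 0 ≤ coeff n (Cs A) := fun n => (coeff_CB_nonneg h0 hA n).1
  have hBnn : ∀ n, 0 ≤ coeff n (Bs A) := fun n => (coeff_CB_nonneg h0 hA n).2
  have hCBnn := coeff_mul_nonneg hCnn hBnn
  have hCCBnn := coeff_mul_nonneg hCnn hCBnn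
  intro N
  induction N using Nat.strong_induction_on with
  | _ N ih =>
    rcases N with _ | N0
    · constructor <;> simp [psum] <;> linarith
    rcases N0 with _ | M
    · have hpsum1 : ∀ F : PowerSeries ℝ, psum F 1 x = coeff 0 F := by
        intro F; unfold psum; rw [Finset.sum_range_one]; simp
      have hc0 : coeff 0 (Cs A) = 1 := by
        conv_lhs => rw [hCrel h0 hA]
        rw [map_add, coeff_X2_mul]
        simp
      have hb0 : coeff 0 (Bs A) = 1 := by
        conv_lhs => rw [hBrel h0]
        rw [map_add, coeff_X2_mul]
        simp
      constructor
      · rw [hpsum1, hc0]; exact (one_le_div hx0).mpr hxley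
      · rw [hpsum1, hb0]; exact hw1
    · have ihM := ih M (by omega)
      have pC0 : 0 ≤ psum (Cs A) M x := psum_nonneg hCnn hx0.le M
      have pB0 : 0 ≤ psum (Bs A) M x := psum_nonneg hBnn hx0.le M
      have pCB0 : 0 ≤ psum (Cs A * Bs A) M x := psum_nonneg hCBnn hx0.le M
      have pCCB0 : 0 ≤ psum (Cs A * (Cs A * Bs A)) M x :=
        psum_nonneg hCCBnn hx0.le M
      have bCB : psum (Cs A * Bs A) M x ≤ (y/x) * w :=
        le_trans (psum_mul_le hCnn hBnn hx0.le M)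
          (mul_le_mul ihM.1 ihM.2 pB0 hyx0)
      have bCCB : psum (Cs A * (Cs A * Bs A)) M x ≤ (y/x) * ((y/x) * w) :=
        le_trans (psum_mul_le hCnn hCBnn hx0.le M)
          (mul_le_mul ihM.1 bCB pCB0 hyx0)
      have bCCCB : psum (Cs A * (Cs A * (Cs A * Bs A))) M x ≤ (y/x) * ((y/x) * ((y/x) * w)) :=
        le_trans (psum_mul_le hCnn hCCBnn hx0.le M)
          (mul_le_mul ihM.1 bCCB pCCB0 hyx0)
      have e3 : (Cs A)^3 * Bs A = Cs A * (Cs A * (Cs A * Bs A)) := by ring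
      have e2 : (Cs A)^2 * Bs A = Cs A * (Cs A * Bs A) := by ring
      have eC : psum (Cs A) (M+1+1) x
          = psum 1 (M+1+1) x + x^2 * psum ((Cs A)^3 * Bs A) M x := by
        conv_lhs => rw [hCrel h0 hA]
        rw [psum_add, psum_X2]
      have eB : psum (Bs A) (M+1+1) x
          = psum 1 (M+1+1) x + x^2 * psum ((Cs A)^2 * Bs A) M x := by
        conv_lhs => rw [hBrel h0]
        rw [psum_add, psum_X2]
      have hone := psum_one_le (x := x) (M+1+1)
      constructor
      · rw [eC, e3]
        have hstep := mul_le_mul_of_nonneg_left bCCCB (sq_nonneg x)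
        have hfin : 1 + x^2 * ((y/x) * ((y/x) * ((y/x) * w))) = y/x := by
          field_simp
          linear_combination hxy
        linarith [hone, hstep, hfin]
      · rw [eB, e2]
        have hstep := mul_le_mul_of_nonneg_left bCCB (sq_nonneg x)
        have hfin : 1 + x^2 * ((y/x) * ((y/x) * w)) = w := by
          field_simp
          linear_combination hwrel
        linarith [hone, hstep, hfin]

include h0 hA in
lemma coeff_A_le {x y w : ℝ} (hx0 : 0 < x) (hxley : x ≤ y) (hw1 : 1 ≤ w)
    (hxy : x + y^3*w = y) (hwrel : 1 + y^2*w = w) :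
    ∀ n, coeff n A * x ^ n ≤ y := by
  have hy0 : 0 ≤ y := le_trans hx0.le hxley
  have hCnn : ∀ n, 0 ≤ coeff n (Cs A) := fun n => (coeff_CB_nonneg h0 hA n).1
  intro n
  cases n with
  | zero =>
    rw [coeff_zero_eq_constantCoeff, h0]
    simpa using hy0
  | succ m =>
    have h1 : coeff (m+1) A = coeff m (Cs A) := by rw [Cs, PowerSeries.coeff_mk]
    have h2 : coeff m (Cs A) * x ^ m ≤ psum (Cs A) (m+1) x := by
      apply Finset.single_le_sum (f := fun i => coeff i (Cs A) * x ^ i)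
      · intro i _
        exact mul_nonneg (hCnn i) (pow_nonneg hx0.le i)
      · exact Finset.self_mem_range_succ m
    have h3 := (main_bound h0 hA hx0 hxley hw1 hxy hwrel (m+1)).1
    have h4 : coeff (m+1) A * x ^ (m+1) = (coeff m (Cs A) * x ^ m) * x := by
      rw [h1, pow_succ]; ring
    rw [h4]
    calc (coeff m (Cs A) * x ^ m) * x ≤ (y/x) * x := by
          apply mul_le_mul_of_nonneg_right (le_trans h2 h3) hx0.le
      _ = y := div_mul_cancel₀ y hx0.ne'
end Main

lemma antidiag_eval (F G : PowerSeries ℝ) (u : ℝ) (n : ℕ) :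
    ∑ kl ∈ Finset.HasAntidiagonal.antidiagonal n, (coeff kl.1 F * u^kl.1) * (coeff kl.2 G * u^kl.2)
      = coeff n (F*G) * u^n := by
  rw [PowerSeries.coeff_mul, Finset.sum_mul]
  apply Finset.sum_congr rfl
  intro p hp
  rw [Finset.HasAntidiagonal.mem_antidiagonal] at hp
  rw [← hp, pow_add]; ring

lemma tsum_coeff_mul (F G : PowerSeries ℝ) (u : ℝ)
    (hF : Summable fun n => ‖coeff n F * u^n‖) (hG : Summable fun n => ‖coeff n G * u^n‖) :
    ((∑' n, coeff n F * u^n) * ∑' n, coeff n G * u^n) = (∑' n, coeff n (F*G) * u^n)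
      ∧ Summable fun n => ‖coeff n (F*G) * u^n‖ := by
  constructor
  · rw [tsum_mul_tsum_eq_tsum_sum_antidiagonal_of_summable_norm hF hG]
    exact tsum_congr (antidiag_eval F G u)
  · apply (summable_norm_sum_mul_antidiagonal_of_summable_norm hF hG).congr
    intro n
    rw [antidiag_eval]

section Radius

variable {A : PowerSeries ℝ}
variable (h0 : constantCoeff A = 0) (hA : A = X + A ^ 3 * (1 - A ^ 2)⁻¹)

include h0 hA in
lemma lower_bound {x : ℝ} (hx0 : 0 < x) (hxz : x < z0) :
    ENNReal.ofReal x
      ≤ (ofScalars ℝ (fun n => coeff n A) : FormalMultilinearSeries ℝ ℝ ℝ).radius := by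
  obtain ⟨y, hy0, hy1, hxley, hcub⟩ := exists_y hx0 hxz
  set w : ℝ := 1 / (1 - y^2) with hw
  have hy2 : (0:ℝ) < 1 - y^2 := by nlinarith
  have hw1 : 1 ≤ w := by
    rw [hw, le_div_iff₀ hy2]; nlinarith
  have hwrel : 1 + y^2*w = w := by rw [hw]; field_simp; ring
  have hxy : x + y^3*w = y := by
    rw [hw]; field_simp; linear_combination hcub
  have hb := coeff_A_le h0 hA hx0 hxley hw1 hxy hwrel
  have he : ENNReal.ofReal x = ((x.toNNReal : ℝ≥0) : ℝ≥0∞) := rfl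
  rw [he]
  apply FormalMultilinearSeries.le_radius_of_bound (C := y)
  intro n
  have hn : ‖(ofScalars ℝ (fun n => coeff n A) : FormalMultilinearSeries ℝ ℝ ℝ) n‖
      = coeff n A := by
    rw [FormalMultilinearSeries.ofScalars_norm, Real.norm_eq_abs,
      abs_of_nonneg (coeff_A_nonneg h0 hA n)]
  rw [hn, Real.coe_toNNReal _ hx0.le]
  exact hb n

include h0 hA in
lemma upper_bound :
    (ofScalars ℝ (fun n => coeff n A) : FormalMultilinearSeries ℝ ℝ ℝ).radius
      ≤ ENNReal.ofReal z0 := by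
  set p : FormalMultilinearSeries ℝ ℝ ℝ := ofScalars ℝ (fun n => coeff n A) with hp
  by_contra hlt
  push_neg at hlt
  obtain ⟨t, ht0, hzt, htr⟩ := ENNReal.lt_iff_exists_real_btwn.mp hlt
  have hz0t : z0 < t := by
    rwa [ENNReal.ofReal_lt_ofReal_iff_of_nonneg z0_pos.le] at hzt
  have ht0' : 0 < t := lt_trans z0_pos hz0t
  have hann := coeff_A_nonneg h0 hA
  have hradt : (↑(t.toNNReal) : ℝ≥0∞) < p.radius := htr
  have hsnorm0 := p.summable_norm_mul_pow hradt
  have hpn : ∀ n, ‖p n‖ = coeff n A := by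
    intro n
    rw [hp, FormalMultilinearSeries.ofScalars_norm, Real.norm_eq_abs, abs_of_nonneg (hann n)]
  have hst : Summable (fun n => coeff n A * t ^ n) := by
    apply hsnorm0.congr
    intro n
    rw [hpn, Real.coe_toNNReal _ ht0'.le]
  have husum : ∀ u : ℝ, |u| ≤ t → Summable (fun n => ‖coeff n A * u ^ n‖) := by
    intro u hu
    apply Summable.of_nonneg_of_le (fun n => norm_nonneg _) _ hst
    intro n
    rw [norm_mul, norm_pow, Real.norm_eq_abs, Real.norm_eq_abs, abs_of_nonneg (hann n)]
    exact mul_le_mul_of_nonneg_left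
      (le_trans (pow_le_pow_left₀ (abs_nonneg u) hu n) le_rfl) (hann n)
  set f : ℝ → ℝ := fun u => ∑' n, coeff n A * u ^ n with hf
  have hsub : Set.Icc (0:ℝ) t ⊆ EMetric.ball 0 p.radius := by
    intro u hu
    show u ∈ Metric.eball 0 p.radius
    rw [Metric.mem_eball, edist_dist, Real.dist_0_eq_abs, abs_of_nonneg hu.1]
    exact lt_of_le_of_lt (ENNReal.ofReal_le_ofReal hu.2) htr
  have hfsum : ∀ u ∈ Set.Icc (0:ℝ) t, f u = p.sum u := by
    intro u hu
    have h1 := p.hasSum (hsub hu)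
    have h2 : (fun n => p n fun _ => u) = fun n => coeff n A * u ^ n := by
      funext n
      rw [hp, FormalMultilinearSeries.ofScalars_apply_eq, smul_eq_mul]
    rw [h2] at h1
    exact h1.tsum_eq
  have hcont : ContinuousOn f (Set.Icc 0 t) :=
    ((FormalMultilinearSeries.continuousOn (p := p)).mono hsub).congr hfsum
  have hkey : ∀ u : ℝ, |u| ≤ t →
      f u + u * (f u * f u) = u + (f u * (f u * f u) + f u * (f u * f u)) := by
    intro u hu
    have hu1 := husum u hu
    obtain ⟨e2, s2⟩ := tsum_coeff_mul A A u hu1 hu1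
    obtain ⟨e3, s3⟩ := tsum_coeff_mul A (A*A) u hu1 s2
    have v1 : Summable (fun n => coeff n A * u ^ n) := hu1.of_norm
    have v2 : Summable (fun n => coeff n (A*A) * u ^ n) := s2.of_norm
    have v3 : Summable (fun n => coeff n (A*(A*A)) * u ^ n) := s3.of_norm
    have vX2 : Summable (fun n => PowerSeries.coeff n (X*(A*A)) * u ^ n) := by
      rw [← summable_nat_add_iff 1]
      apply (v2.mul_left u).congr
      intro n
      rw [PowerSeries.coeff_succ_X_mul]; ring
    have tX2 : (∑' n, PowerSeries.coeff n (X*(A*A)) * u ^ n) = u * ∑' n, coeff n (A*A) * u^n := by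
      rw [Summable.tsum_eq_zero_add vX2]
      have hz : coeff 0 (X*(A*A)) * u ^ 0 = 0 := by
        simp [PowerSeries.coeff_zero_eq_constantCoeff]
      rw [hz, zero_add, ← tsum_mul_left]
      apply tsum_congr
      intro n
      rw [PowerSeries.coeff_succ_X_mul]; ring
    have hcu : A + X*(A*A) = X + (A*(A*A) + A*(A*A)) := by
      have h := hcubic h0 hA
      linear_combination -h
    have vX : Summable (fun n => PowerSeries.coeff n (X : PowerSeries ℝ) * u ^ n) := by
      apply summable_of_ne_finset_zero (s := {1})
      intro n hn
      simp only [Finset.mem_singleton] at hn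
      rw [PowerSeries.coeff_X, if_neg hn, zero_mul]
    have tX : (∑' n, PowerSeries.coeff n (X : PowerSeries ℝ) * u ^ n) = u := by
      rw [tsum_eq_single 1]
      · rw [PowerSeries.coeff_X, if_pos rfl, pow_one, one_mul]
      · intro b hb; rw [PowerSeries.coeff_X, if_neg hb, zero_mul]
    calc f u + u * (f u * f u)
        = (∑' n, coeff n A * u^n) + (∑' n, PowerSeries.coeff n (X*(A*A)) * u^n) := by
          simp only [hf]
          rw [tX2, ← e2]
      _ = ∑' n, (coeff n A * u^n + PowerSeries.coeff n (X*(A*A)) * u^n) := (Summable.tsum_add v1 vX2).symm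
      _ = ∑' n, (PowerSeries.coeff n (X : PowerSeries ℝ) * u^n
            + (coeff n (A*(A*A)) * u^n + coeff n (A*(A*A)) * u^n)) := by
          apply tsum_congr
          intro n
          have h := congrArg (coeff n) hcu
          simp only [map_add] at h
          linear_combination u^n * h
      _ = (∑' n, PowerSeries.coeff n (X : PowerSeries ℝ) * u^n)
            + ∑' n, (coeff n (A*(A*A)) * u^n + coeff n (A*(A*A)) * u^n) :=
          Summable.tsum_add vX (v3.add v3)
      _ = u + (f u * (f u * f u) + f u * (f u * f u)) := by
          rw [tX, Summable.tsum_add v3 v3]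
          simp only [hf]
          rw [← e3, ← e2]
  have hf0 : f 0 = 0 := by
    simp only [hf]
    rw [tsum_eq_single 0]
    · rw [pow_zero, mul_one, PowerSeries.coeff_zero_eq_constantCoeff_apply, h0]
    · intro b hb; rw [zero_pow hb, mul_zero]
  have hft0 : 0 ≤ f t :=
    tsum_nonneg (fun n => mul_nonneg (hann n) (pow_nonneg ht0'.le n))
  have hflt1 : f t < 1 := by
    by_contra hge
    push_neg at hge
    have h1mem : (1:ℝ) ∈ Set.Icc (f 0) (f t) := by rw [hf0]; exact ⟨zero_le_one, hge⟩
    obtain ⟨u, hu, hfu⟩ := intermediate_value_Icc ht0'.le hcont h1mem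
    have hk := hkey u (by rw [abs_of_nonneg hu.1]; exact hu.2)
    rw [hfu] at hk
    linarith
  have hcub := hkey t (by rw [abs_of_nonneg ht0'.le])
  have hki := key_ineq hft0
  have hprod : 0 < (t - z0) * (1 - f t ^ 2) :=
    mul_pos (by linarith) (by nlinarith [hft0, hflt1])
  nlinarith [hcub, hki, hprod]

end Radius

end BipRad

/-- If `A` is the power series with `A(0) = 0` satisfying `A = z + A³/(1-A²)`
(the generating function of bipartite polygon dissections plus a single edge), then its
radius of convergence equals `-(1/8)·sqrt(5-√17)·(√17-7)`. -/
theorem bipartite_dissection_radius (A : PowerSeries ℝ)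
    (h0 : PowerSeries.constantCoeff A = 0)
    (hA : A = PowerSeries.X + A ^ 3 * (1 - A ^ 2)⁻¹) :
    (FormalMultilinearSeries.ofScalars ℝ
        (fun n => PowerSeries.coeff n A) : FormalMultilinearSeries ℝ ℝ ℝ).radius =
      ENNReal.ofReal (-(1 / 8) * Real.sqrt (5 - Real.sqrt 17) * (Real.sqrt 17 - 7)) := by
  have hz : -(1 / 8) * Real.sqrt (5 - Real.sqrt 17) * (Real.sqrt 17 - 7) = BipRad.z0 := by
    unfold BipRad.z0 BipRad.rho BipRad.s
    ring
  rw [hz]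
  apply le_antisymm (BipRad.upper_bound h0 hA)
  refine le_of_forall_lt_imp_le_of_dense fun c hc => ?_
  have hctop : c ≠ ⊤ := (hc.trans ENNReal.ofReal_lt_top).ne
  have hcz : c.toReal < BipRad.z0 := by
    rw [← ENNReal.ofReal_toReal hctop] at hc
    exact (ENNReal.ofReal_lt_ofReal_iff_of_nonneg ENNReal.toReal_nonneg).mp hc
  have hctr : (0:ℝ) ≤ c.toReal := ENNReal.toReal_nonneg
  set x := (c.toReal + BipRad.z0) / 2 with hx
  have hx0 : 0 < x := by
    have := BipRad.z0_pos
    rw [hx]; linarith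
  have hxz : x < BipRad.z0 := by rw [hx]; linarith
  have h1 : c ≤ ENNReal.ofReal x := by
    rw [← ENNReal.ofReal_toReal hctop]
    exact ENNReal.ofReal_le_ofReal (by rw [hx]; linarith)
  exact le_trans h1 (BipRad.lower_bound h0 hA hx0 hxz)
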